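/- In R_t = ℤ[t_1,t_2,t_3,t_4] localized at t_1, the defining ideal I of ℤ[x^4,x^3y,xy^3,y^4] becomes generated by the two elements t_3 − t_2^3/t_1^2 and t_4 − t_2^4/t_1^3; these form a regular sequence in R_{t_1}. -/

import Mathlib

open MvPolynomial Pointwise
set_option maxHeartbeats 1000000
set_option synthInstance.maxHeartbeats 200000

noncomputable section CIproof

noncomputable section CIproof

lemma prime_X2 : Prime (X 2 : MvPolynomial (Fin 4) ℤ) := by
  let e := (renameEquiv ℤ (Equiv.swap (2 : Fin 4) 0)).trans (finSuccEquiv ℤ 3)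
  have he : e (X 2) = Polynomial.X := by
    simp [e, renameEquiv_apply, rename_X, Equiv.swap_apply_left, finSuccEquiv_X_zero]
  rw [← MulEquiv.prime_iff e.toRingEquiv.toMulEquiv,
    show e.toRingEquiv.toMulEquiv (X 2) = e (X 2) from rfl, he]
  exact Polynomial.prime_X

def Gm (e : Fin 2 →₀ ℕ) : Fin 2 →₀ ℕ :=
  Finsupp.single 0 (4 * e 0 + 3 * e 1) + Finsupp.single 1 (e 1)

lemma Gm_apply0 (e : Fin 2 →₀ ℕ) : Gm e 0 = 4 * e 0 + 3 * e 1 := by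
  simp [Gm, Finsupp.single_apply]

lemma Gm_apply1 (e : Fin 2 →₀ ℕ) : Gm e 1 = e 1 := by
  simp [Gm, Finsupp.single_apply]

lemma Gm_inj : Function.Injective Gm := by
  intro e m h
  have h1 : e 1 = m 1 := by rw [← Gm_apply1 e, h, Gm_apply1]
  have h0 : e 0 = m 0 := by
    have h2 : Gm e 0 = Gm m 0 := by rw [h]
    rw [Gm_apply0, Gm_apply0] at h2; omega
  ext i; fin_cases i <;> assumption

lemma aeval_monom (e : Fin 2 →₀ ℕ) (a : ℤ) :
    aeval ![(X 0 : MvPolynomial (Fin 2) ℤ) ^ 4, X 0 ^ 3 * X 1] (monomial e a) =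
      monomial (Gm e) a := by
  rw [aeval_monomial, monomial_eq]
  congr 1
  rw [Finsupp.prod_fintype _ _ (fun i => pow_zero _),
      Finsupp.prod_fintype _ _ (fun i => pow_zero _), Fin.prod_univ_two, Fin.prod_univ_two]
  simp only [Matrix.cons_val_zero, Matrix.cons_val_one, Matrix.head_cons, Gm_apply0, Gm_apply1]
  ring

lemma f_inj (p : MvPolynomial (Fin 2) ℤ)
    (h : aeval ![(X 0 : MvPolynomial (Fin 2) ℤ) ^ 4, X 0 ^ 3 * X 1] p = 0) : p = 0 := by
  have key : ∀ (q : MvPolynomial (Fin 2) ℤ) (m : Fin 2 →₀ ℕ),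
      coeff (Gm m) (aeval ![(X 0 : MvPolynomial (Fin 2) ℤ) ^ 4, X 0 ^ 3 * X 1] q) = coeff m q := by
    intro q
    induction q using MvPolynomial.induction_on' with
    | monomial e a =>
      intro m
      rw [aeval_monom, coeff_monomial, coeff_monomial]
      by_cases he : e = m
      · simp [he]
      · rw [if_neg he, if_neg (fun hc => he (Gm_inj hc))]
    | add p q hp hq =>
      intro m
      rw [map_add, coeff_add, coeff_add, hp, hq]
  ext m
  rw [← key p m, h]
  simp
abbrev T2 := MvPolynomial (Fin 2) ℤ
abbrev R4 := MvPolynomial (Fin 4) ℤ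
abbrev xx : T2 := X 0
abbrev yy : T2 := X 1
abbrev LL := Localization.Away (X 0 : R4)
abbrev PP := Localization.Away (xx ^ 4 : T2)

def uu : LL := IsLocalization.Away.invSelf (S := LL) (X 0 : R4)
def Am : R4 →+* LL := algebraMap R4 LL
def phi : R4 →+* T2 := ↑(aeval ![xx ^ 4, xx ^ 3 * yy, xx * yy ^ 3, yy ^ 4] : R4 →ₐ[ℤ] T2)
def g3 : LL := Am (X 2) - Am (X 1) ^ 3 * uu ^ 2
def g4 : LL := Am (X 3) - Am (X 1) ^ 4 * uu ^ 3

lemma hA1 : Am (X 0) * uu = 1 := IsLocalization.Away.mul_invSelf (S := LL) (X 0 : R4)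

lemma hApow (n : ℕ) : Am (X 0) ^ n * uu ^ n = 1 := by rw [← mul_pow, hA1, one_pow]

lemma Am_inj : Function.Injective Am :=
  IsLocalization.injective LL
    (powers_le_nonZeroDivisors_of_noZeroDivisors (X_ne_zero (R := ℤ) (0 : Fin 4)))

instance : IsDomain LL :=
  IsLocalization.isDomain_of_le_nonZeroDivisors LL
    (powers_le_nonZeroDivisors_of_noZeroDivisors (X_ne_zero (R := ℤ) (0 : Fin 4)))

instance : IsDomain PP :=
  IsLocalization.isDomain_of_le_nonZeroDivisors PP
    (powers_le_nonZeroDivisors_of_noZeroDivisors (pow_ne_zero 4 (X_ne_zero (R := ℤ) (0 : Fin 2))))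

lemma uu_unit : IsUnit uu := IsUnit.of_mul_eq_one _ ((mul_comm _ _).trans hA1)

lemma hg3 : g3 = Am (X 2 * X 0 ^ 2 - X 1 ^ 3) * uu ^ 2 := by
  simp only [g3, map_sub, map_mul, map_pow]
  linear_combination (-(Am (X 2)) * (Am (X 0) * uu + 1)) * hA1

lemma hg4 : g4 = Am (X 3 * X 0 ^ 3 - X 1 ^ 4) * uu ^ 3 := by
  simp only [g4, map_sub, map_mul, map_pow]
  linear_combination (-(Am (X 3)) * ((Am (X 0) * uu) ^ 2 + Am (X 0) * uu + 1)) * hA1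

lemma phiG3 : phi (X 2 * X 0 ^ 2 - X 1 ^ 3) = 0 := by
  simp [phi]; ring

lemma phiG4 : phi (X 3 * X 0 ^ 3 - X 1 ^ 4) = 0 := by
  simp [phi]; ring

lemma hT : Submonoid.map phi (Submonoid.powers (X 0 : R4)) = Submonoid.powers (xx ^ 4 : T2) := by
  rw [Submonoid.map_powers]
  congr 1
  simp [phi]

def psi : LL →+* PP :=
  IsLocalization.map (M := Submonoid.powers (X 0 : R4)) (T := Submonoid.powers (xx ^ 4 : T2))
    PP phi (hT.symm ▸ Submonoid.le_comap_map _)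

lemma psi_Am (r : R4) : psi (Am r) = algebraMap T2 PP (phi r) :=
  IsLocalization.map_eq _ _

lemma ker_psi : RingHom.ker psi = (RingHom.ker phi).map Am :=
  IsLocalization.ker_map PP phi hT

lemma psi_u : algebraMap T2 PP (xx ^ 4) * psi uu = 1 := by
  have := congrArg psi hA1
  rw [map_mul, map_one, psi_Am] at this
  rw [← this]
  congr 2
  simp [phi]

lemma psi_g3 : psi g3 = 0 := by
  rw [hg3, map_mul, psi_Am, phiG3, map_zero, zero_mul]

lemma psi_g4 : psi g4 = 0 := by
  rw [hg4, map_mul, psi_Am, phiG4, map_zero, zero_mul]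

def Bv : T2 →ₐ[ℤ] LL := aeval ![Am (X 0), Am (X 1)]

lemma g3_mem : g3 ∈ Ideal.span {g3, g4} := Ideal.subset_span (by simp)
lemma g4_mem : g4 ∈ Ideal.span {g3, g4} := Ideal.subset_span (by simp)
lemma normalform (r : R4) : ∃ (p : T2) (n : ℕ),
    Am r - Bv p * uu ^ n ∈ Ideal.span {g3, g4} := by
  have hB0 : Bv (X 0) = Am (X 0) := by simp [Bv]
  have hB1 : Bv (X 1) = Am (X 1) := by simp [Bv]
  induction r using MvPolynomial.induction_on with
  | C a =>
      refine ⟨C a, 0, ?_⟩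
      have h1 : Bv (C a) = (a : LL) := by
        simp only [Bv, aeval_C]; exact eq_intCast _ a
      have h2 : Am (C a) = (a : LL) := eq_intCast (Am.comp C) a
      rw [h1, h2, pow_zero, mul_one, sub_self]
      exact Ideal.zero_mem _
  | add r s ihr ihs =>
      obtain ⟨p, n, hp⟩ := ihr
      obtain ⟨q, m, hq⟩ := ihs
      refine ⟨p * X 0 ^ m + q * X 0 ^ n, n + m, ?_⟩
      have h2 := Ideal.add_mem _ hp hq
      convert h2 using 1
      simp only [map_add, map_mul, map_pow, hB0]
      linear_combination (-(Bv p) * uu ^ n) * hApow m + (-(Bv q) * uu ^ m) * hApow n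
  | mul_X r i ihr =>
      obtain ⟨p, n, hp⟩ := ihr
      fin_cases i
      · refine ⟨p * X 0, n, ?_⟩
        have h2 := Ideal.mul_mem_right (Am (X 0)) _ hp
        convert h2 using 1
        simp only [map_mul, hB0]
        norm_num
        ring
      · refine ⟨p * X 1, n, ?_⟩
        have h2 := Ideal.mul_mem_right (Am (X 1)) _ hp
        convert h2 using 1
        simp only [map_mul, hB1]
        norm_num
        ring
      · refine ⟨p * X 1 ^ 3, n + 2, ?_⟩
        show Am (r * X 2) - Bv (p * X 1 ^ 3) * uu ^ (n + 2) ∈ Ideal.span {g3, g4}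
        have h2 := Ideal.add_mem _ (Ideal.mul_mem_right (Am (X 2)) _ hp)
          (Ideal.mul_mem_left _ (Bv p * uu ^ n) g3_mem)
        convert h2 using 1
        simp only [map_mul, map_pow, hB1, g3]
        ring
      · refine ⟨p * X 1 ^ 4, n + 3, ?_⟩
        show Am (r * X 3) - Bv (p * X 1 ^ 4) * uu ^ (n + 3) ∈ Ideal.span {g3, g4}
        have h2 := Ideal.add_mem _ (Ideal.mul_mem_right (Am (X 3)) _ hp)
          (Ideal.mul_mem_left _ (Bv p * uu ^ n) g4_mem)
        convert h2 using 1
        simp only [map_mul, map_pow, hB1, g4]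
        ring

lemma span_le_ker : Ideal.span {g3, g4} ≤ RingHom.ker psi := by
  rw [Ideal.span_le]
  rintro z hz
  simp only [Set.mem_insert_iff, Set.mem_singleton_iff] at hz
  rcases hz with rfl | rfl
  · exact psi_g3
  · exact psi_g4

lemma psi_Bv (p : T2) :
    psi (Bv p) = algebraMap T2 PP (aeval ![xx ^ 4, xx ^ 3 * yy] p) := by
  have hext : psi.comp (Bv : T2 →+* LL) =
      (algebraMap T2 PP).comp ↑(aeval ![xx ^ 4, xx ^ 3 * yy] : T2 →ₐ[ℤ] T2) := by
    apply MvPolynomial.ringHom_ext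
    · intro a
      simp only [RingHom.coe_comp, Function.comp_apply, AlgHom.coe_toRingHom]
      have h1 : Bv (C a) = ((a : ℤ) : LL) := by
        simp only [Bv, aeval_C]; exact eq_intCast _ a
      have h2 : (aeval ![xx ^ 4, xx ^ 3 * yy] : T2 →ₐ[ℤ] T2) (C a) = (C a : T2) := by
        simp only [aeval_C]; rfl
      rw [h1, h2, map_intCast]
      have : (C a : T2) = ((a : ℤ) : T2) := by
        rw [← MvPolynomial.algebraMap_eq]; exact (eq_intCast (algebraMap ℤ T2) a)
      rw [this, map_intCast]
    · intro i
      simp only [RingHom.coe_comp, Function.comp_apply, AlgHom.coe_toRingHom]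
      fin_cases i
      · show psi (Bv (X 0)) = algebraMap T2 PP ((aeval ![xx ^ 4, xx ^ 3 * yy]) (X 0))
        have : Bv (X 0) = Am (X 0) := by simp [Bv]
        rw [this, psi_Am]
        congr 1
        simp [phi]
      · show psi (Bv (X 1)) = algebraMap T2 PP ((aeval ![xx ^ 4, xx ^ 3 * yy]) (X 1))
        have : Bv (X 1) = Am (X 1) := by simp [Bv]
        rw [this, psi_Am]
        congr 1
        simp [phi]
  exact RingHom.congr_fun hext p

lemma mapI_eq : (RingHom.ker phi).map Am = Ideal.span {g3, g4} := by
  apply le_antisymm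
  · rw [Ideal.map_le_iff_le_comap]
    intro r hr
    simp only [Ideal.mem_comap]
    obtain ⟨p, n, hmem⟩ := normalform r
    have h0 : psi (Am r) = 0 := by
      rw [psi_Am, RingHom.mem_ker.mp hr, map_zero]
    have hjm := span_le_ker hmem
    rw [RingHom.mem_ker, map_sub, h0, zero_sub, neg_eq_zero, map_mul, map_pow] at hjm
    have hunit : IsUnit (psi uu) := IsUnit.of_mul_eq_one _ ((mul_comm _ _).trans psi_u)
    have hBv0 : psi (Bv p) = 0 := ((hunit.pow n).mul_left_eq_zero).mp hjm
    rw [psi_Bv] at hBv0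
    have hPinj : Function.Injective (algebraMap T2 PP) :=
      IsLocalization.injective PP
        (powers_le_nonZeroDivisors_of_noZeroDivisors
          (pow_ne_zero 4 (X_ne_zero (R := ℤ) (0 : Fin 2))))
    have hfp : aeval ![xx ^ 4, xx ^ 3 * yy] p = 0 :=
      hPinj (by rw [hBv0, map_zero])
    have hp0 : p = 0 := f_inj p hfp
    rw [hp0, map_zero, zero_mul, sub_zero] at hmem
    exact hmem
  · rw [Ideal.span_le]
    rintro z hz
    simp only [Set.mem_insert_iff, Set.mem_singleton_iff] at hz
    rcases hz with rfl | rfl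
    · rw [hg3]
      exact Ideal.mul_mem_right _ _
        (Ideal.mem_map_of_mem Am (RingHom.mem_ker.mpr phiG3))
    · rw [hg4]
      exact Ideal.mul_mem_right _ _
        (Ideal.mem_map_of_mem Am (RingHom.mem_ker.mpr phiG4))

/-! ### The change-of-variables automorphism -/

def vs : Fin 4 → LL :=
  ![Am (X 0), Am (X 1), Am (X 2) - Am (X 1) ^ 3 * uu ^ 2, Am (X 3) - Am (X 1) ^ 4 * uu ^ 3]
def vt : Fin 4 → LL :=
  ![Am (X 0), Am (X 1), Am (X 2) + Am (X 1) ^ 3 * uu ^ 2, Am (X 3) + Am (X 1) ^ 4 * uu ^ 3]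
def bs : R4 →+* LL := ↑(aeval vs : R4 →ₐ[ℤ] LL)
def bt : R4 →+* LL := ↑(aeval vt : R4 →ₐ[ℤ] LL)

lemma bs0 : bs (X 0) = Am (X 0) := by simp [bs, vs]
lemma bs1 : bs (X 1) = Am (X 1) := by simp [bs, vs]
lemma bs2 : bs (X 2) = Am (X 2) - Am (X 1) ^ 3 * uu ^ 2 := by simp [bs, vs]
lemma bs3 : bs (X 3) = Am (X 3) - Am (X 1) ^ 4 * uu ^ 3 := by simp [bs, vs]
lemma bt0 : bt (X 0) = Am (X 0) := by simp [bt, vt]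
lemma bt1 : bt (X 1) = Am (X 1) := by simp [bt, vt]
lemma bt2 : bt (X 2) = Am (X 2) + Am (X 1) ^ 3 * uu ^ 2 := by simp [bt, vt]
lemma bt3 : bt (X 3) = Am (X 3) + Am (X 1) ^ 4 * uu ^ 3 := by simp [bt, vt]

def sig : LL →+* LL :=
  IsLocalization.Away.lift (X 0 : R4) (g := bs) (bs0 ▸ IsUnit.of_mul_eq_one uu hA1)
def tau : LL →+* LL :=
  IsLocalization.Away.lift (X 0 : R4) (g := bt) (bt0 ▸ IsUnit.of_mul_eq_one uu hA1)

lemma sig_Am (r : R4) : sig (Am r) = bs r := IsLocalization.Away.lift_eq _ _ r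
lemma tau_Am (r : R4) : tau (Am r) = bt r := IsLocalization.Away.lift_eq _ _ r

lemma sig_u : sig uu = uu := by
  have h := congrArg sig hA1
  rw [map_mul, map_one, sig_Am, bs0] at h
  calc sig uu = (uu * Am (X 0)) * sig uu := by rw [mul_comm uu, hA1, one_mul]
  _ = uu * (Am (X 0) * sig uu) := by ring
  _ = uu := by rw [h, mul_one]

lemma tau_u : tau uu = uu := by
  have h := congrArg tau hA1
  rw [map_mul, map_one, tau_Am, bt0] at h
  calc tau uu = (uu * Am (X 0)) * tau uu := by rw [mul_comm uu, hA1, one_mul]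
  _ = uu * (Am (X 0) * tau uu) := by ring
  _ = uu := by rw [h, mul_one]

lemma sigtau (z : LL) : sig (tau z) = z := by
  have hext : sig.comp tau = RingHom.id LL := by
    apply IsLocalization.ringHom_ext (Submonoid.powers (X 0 : R4))
    apply MvPolynomial.ringHom_ext
    · intro a
      simp only [RingHom.coe_comp, Function.comp_apply, RingHom.id_apply]
      rw [show (algebraMap R4 LL) (C a) = ((a : ℤ) : LL) from eq_intCast (Am.comp C) a,
        map_intCast, map_intCast]
    · intro i
      simp only [RingHom.coe_comp, Function.comp_apply, RingHom.id_apply]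
      fin_cases i
      · show sig (tau (Am (X 0))) = Am (X 0)
        rw [tau_Am, bt0, sig_Am, bs0]
      · show sig (tau (Am (X 1))) = Am (X 1)
        rw [tau_Am, bt1, sig_Am, bs1]
      · show sig (tau (Am (X 2))) = Am (X 2)
        rw [tau_Am, bt2, map_add, map_mul, map_pow, map_pow, sig_Am, sig_Am, sig_u,
          bs2, bs1]
        ring
      · show sig (tau (Am (X 3))) = Am (X 3)
        rw [tau_Am, bt3, map_add, map_mul, map_pow, map_pow, sig_Am, sig_Am, sig_u,
          bs3, bs1]
        ring
  exact RingHom.congr_fun hext z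

lemma tau_g3 : tau g3 = Am (X 2) := by
  simp only [g3, map_sub, map_mul, map_pow, tau_Am, tau_u, bt2, bt1]
  ring

lemma tau_g4 : tau g4 = Am (X 3) := by
  simp only [g4, map_sub, map_mul, map_pow, tau_Am, tau_u, bt3, bt1]
  ring

lemma sig_g3 : sig (Am (X 2)) = g3 := by
  rw [sig_Am, bs2]; rfl

lemma key (z w : LL) (h : g4 * z = g3 * w) : ∃ v, z = g3 * v := by
  have h' : Am (X 3) * tau z = Am (X 2) * tau w := by
    have := congrArg tau h
    rw [map_mul, map_mul, tau_g3, tau_g4] at this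
    exact this
  obtain ⟨n, a, ha'⟩ := IsLocalization.Away.surj (S := LL) (X 0 : R4) (tau z)
  obtain ⟨m, b, hb'⟩ := IsLocalization.Away.surj (S := LL) (X 0 : R4) (tau w)
  have ha : tau z * Am (X 0) ^ n = Am a := ha'
  have hb : tau w * Am (X 0) ^ m = Am b := hb'
  have hre : Am (X 3 * a * X 0 ^ m) = Am (X 2 * b * X 0 ^ n) := by
    simp only [map_mul, map_pow]
    linear_combination (-(Am (X 3)) * Am (X 0) ^ m) * ha + (Am (X 2) * Am (X 0) ^ n) * hb
      + (Am (X 0) ^ n * Am (X 0) ^ m) * h'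
  have heq := Am_inj hre
  have hdvd : (X 2 : R4) ∣ a := by
    have hp := prime_X2
    have hd : (X 2 : R4) ∣ X 3 * a * X 0 ^ m := ⟨b * X 0 ^ n, by rw [heq]; ring⟩
    rcases hp.2.2 _ _ hd with h1 | h2
    · rcases hp.2.2 _ _ h1 with h3 | h4
      · exact absurd (X_dvd_X.mp h3) (by decide)
      · exact h4
    · exact absurd (X_dvd_X.mp (hp.dvd_of_dvd_pow h2)) (by decide)
  obtain ⟨c, rfl⟩ := hdvd
  refine ⟨sig (Am c * uu ^ n), ?_⟩
  have hz : tau z = Am (X 2) * (Am c * uu ^ n) := by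
    have hpn := hApow n
    simp only [map_mul] at ha
    linear_combination uu ^ n * ha - tau z * hpn
  conv_lhs => rw [← sigtau z]
  rw [hz, map_mul, sig_g3]

end CIproof

lemma uu_ne : uu ≠ 0 := fun hu => one_ne_zero (α := LL) (by rw [← hA1, hu, mul_zero])

lemma g3_ne : g3 ≠ 0 := by
  intro h0
  have h' : Am (X 2 * X 0 ^ 2 - X 1 ^ 3) * uu ^ 2 = 0 := by rw [← hg3, h0]
  have h1 : Am (X 2 * X 0 ^ 2 - X 1 ^ 3) = 0 := by
    rcases mul_eq_zero.mp h' with h | h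
    · exact h
    · exact absurd h (pow_ne_zero _ uu_ne)
  have h2 : (X 2 * X 0 ^ 2 - X 1 ^ 3 : R4) = 0 := Am_inj (h1.trans (map_zero Am).symm)
  have h3 := congrArg (eval (![0, 1, 0, 0] : Fin 4 → ℤ)) h2
  simp at h3

lemma h3reg : IsSMulRegular LL g3 := fun a b hab =>
  mul_left_cancel₀ g3_ne (by simpa [smul_eq_mul] using hab)

lemma hsub : (g3 • ⊤ : Submodule LL LL) = Ideal.span {g3} := by
  rw [← Submodule.ideal_span_singleton_smul, Ideal.smul_eq_mul, Ideal.mul_top]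

lemma h4reg : IsSMulRegular (QuotSMulTop g3 LL) g4 := by
  intro z w hzw
  obtain ⟨a, rfl⟩ := Submodule.Quotient.mk_surjective _ z
  obtain ⟨b, rfl⟩ := Submodule.Quotient.mk_surjective _ w
  have hzw' : (Submodule.Quotient.mk (g4 * a) : QuotSMulTop g3 LL) =
      Submodule.Quotient.mk (g4 * b) := hzw
  rw [Submodule.Quotient.eq, hsub, Ideal.mem_span_singleton] at hzw'
  obtain ⟨s, hs⟩ := hzw'
  have h' : g4 * (a - b) = g3 * s := by
    rw [← hs]; ring
  obtain ⟨v, hv⟩ := key (a - b) s h'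
  rw [Submodule.Quotient.eq, hsub, Ideal.mem_span_singleton]
  exact ⟨v, hv⟩

lemma span_ne_top : Ideal.span {g3, g4} ≠ ⊤ := by
  intro h
  have h1 : (1 : LL) ∈ Ideal.span {g3, g4} := h ▸ Submodule.mem_top
  obtain ⟨c, d, hcd⟩ := Ideal.mem_span_pair.mp h1
  have h2 := congrArg psi hcd
  rw [map_add, map_mul, map_mul, psi_g3, psi_g4, mul_zero, mul_zero, add_zero, map_one] at h2
  exact zero_ne_one h2

lemma regular : RingTheory.Sequence.IsRegular LL [g3, g4] := by
  constructor
  · exact RingTheory.Sequence.IsWeaklyRegular.cons h3reg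
      (RingTheory.Sequence.IsWeaklyRegular.cons h4reg (RingTheory.Sequence.IsWeaklyRegular.nil _ _))
  · intro hEq
    apply span_ne_top
    have h2 : Ideal.ofList [g3, g4] • (⊤ : Submodule LL LL) = Ideal.span {g3, g4} := by
      rw [Ideal.smul_eq_mul, Ideal.mul_top, Ideal.ofList_cons, Ideal.ofList_singleton,
        ← Ideal.span_union, Set.singleton_union]
    rw [← h2, ← hEq]

end CIproof


/-- Let `I ⊆ R = ℤ[t₁,t₂,t₃,t₄]` be the kernel of the map `R → ℤ[x,y]` with `t₁ ↦ x⁴`,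
`t₂ ↦ x³y`, `t₃ ↦ xy³`, `t₄ ↦ y⁴`.  In the localization `R_{t₁}`, the extended ideal `I R_{t₁}`
is generated by the two elements `t₃ - t₂³/t₁²` and `t₄ - t₂⁴/t₁³`, and these two elements
form a regular sequence in `R_{t₁}`. -/
theorem localized_defining_ideal_is_complete_intersection :
    let x : MvPolynomial (Fin 2) ℤ := X 0
    let y : MvPolynomial (Fin 2) ℤ := X 1
    let R := MvPolynomial (Fin 4) ℤ
    let φ : R →ₐ[ℤ] MvPolynomial (Fin 2) ℤ := aeval ![x ^ 4, x ^ 3 * y, x * y ^ 3, y ^ 4]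
    let I : Ideal R := RingHom.ker (φ : R →+* MvPolynomial (Fin 2) ℤ)
    let L := Localization.Away (X 0 : R)
    let u : L := IsLocalization.Away.invSelf (S := L) (X 0 : R)  -- `u = 1/t₁`
    let g₃ : L := algebraMap R L (X 2) - algebraMap R L (X 1) ^ 3 * u ^ 2
    let g₄ : L := algebraMap R L (X 3) - algebraMap R L (X 1) ^ 4 * u ^ 3
    Ideal.map (algebraMap R L) I = Ideal.span {g₃, g₄} ∧
    RingTheory.Sequence.IsRegular L [g₃, g₄] := by
  intro x y R φ I L u g₃ g₄
  exact ⟨mapI_eq, regular⟩
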